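/- Let P and Q be orthogonal projections on a Hilbert space H with ‖π(P - Q)‖ < 1 in the Calkin algebra (i.e., the image of P - Q in B(H)/K(H) has norm < 1). Then the operator Q restricted to ran P, viewed as an operator from ran P to ran Q, is Fredholm, and its index equals dim(ran P ∩ ker Q) - dim(ker P ∩ ran Q). -/

import Mathlib

open Metric Filter

open Metric Filter

/-- Extract a subsequence on which `K` applied to a bounded sequence is Cauchy. -/
private lemma compact_subseq {𝕜 H : Type*} [RCLike 𝕜] [NormedAddCommGroup H]
    [NormedSpace 𝕜 H] {K : H →L[𝕜] H} (hK : IsCompactOperator ⇑K)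
    (x : ℕ → H) (hx : ∀ n, ‖x n‖ ≤ 1) :
    ∃ φ : ℕ → ℕ, StrictMono φ ∧ CauchySeq (fun n => K (x (φ n))) := by
  have hc : IsCompact (closure (⇑K '' closedBall (0 : H) 1)) := by
    have : IsCompactOperator ⇑(K : H →ₗ[𝕜] H) := hK
    exact this.isCompact_closure_image_closedBall 1
  have hmem : ∀ n, K (x n) ∈ closure (⇑K '' closedBall (0 : H) 1) := fun n =>
    subset_closure ⟨x n, by simpa [mem_closedBall, dist_zero_right] using hx n, rfl⟩
  obtain ⟨a, _, φ, hφ, hconv⟩ := hc.isSeqCompact hmem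
  exact ⟨φ, hφ, hconv.cauchySeq⟩

/-- Riesz-type lemma: a closed subspace on which a compact operator is bounded below
is finite dimensional. -/
private lemma findim_of_compact_bound {𝕜 H : Type*} [RCLike 𝕜] [NormedAddCommGroup H]
    [InnerProductSpace 𝕜 H] [CompleteSpace H]
    {K : H →L[𝕜] H} (hK : IsCompactOperator ⇑K) (S : Submodule 𝕜 H)
    (hS : IsClosed (S : Set H)) {c : ℝ} (hc : 0 < c)
    (h : ∀ x ∈ S, c * ‖x‖ ≤ ‖K x‖) : FiniteDimensional 𝕜 S := by
  haveI : CompleteSpace S := hS.completeSpace_coe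
  apply FiniteDimensional.of_isCompact_closedBall₀ 𝕜 (r := 1) one_pos
  apply IsSeqCompact.isCompact
  intro u hu
  obtain ⟨φ, hφ, hcau⟩ := compact_subseq hK (fun n => (u n : H)) (fun n => by
    simpa [mem_closedBall, dist_zero_right] using hu n)
  have hcau' : CauchySeq (fun n => u (φ n)) := by
    rw [Metric.cauchySeq_iff] at hcau ⊢
    intro ε hε
    obtain ⟨N, hN⟩ := hcau (c * ε) (by positivity)
    refine ⟨N, fun m hm n hn => ?_⟩
    have h1 := hN m hm n hn
    have h2 : c * ‖(u (φ m) : H) - (u (φ n) : H)‖ ≤ ‖K ((u (φ m) : H) - (u (φ n) : H))‖ :=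
      h _ (sub_mem (u (φ m)).2 (u (φ n)).2)
    rw [map_sub] at h2
    rw [dist_eq_norm] at h1
    rw [Subtype.dist_eq, dist_eq_norm]
    nlinarith [norm_nonneg ((u (φ m) : H) - (u (φ n) : H))]
  obtain ⟨l, hl⟩ := cauchySeq_tendsto_of_complete hcau'
  exact ⟨l, isClosed_closedBall.mem_of_tendsto hl (Eventually.of_forall fun n => hu (φ n)), φ, hφ, hl⟩

/-- If `c‖x‖ ≤ ‖Tx‖ + ‖Kx‖` on a closed subspace `S` with `K` compact and `T` injective on `S`,
then `T` is bounded below on `S`. -/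
private lemma bddBelow_of_compact_bound {𝕜 H : Type*} [RCLike 𝕜] [NormedAddCommGroup H]
    [InnerProductSpace 𝕜 H] [CompleteSpace H]
    {K T : H →L[𝕜] H} (hK : IsCompactOperator ⇑K) (S : Submodule 𝕜 H)
    (hS : IsClosed (S : Set H)) {c : ℝ} (hc : 0 < c)
    (h : ∀ x ∈ S, c * ‖x‖ ≤ ‖T x‖ + ‖K x‖)
    (h0 : ∀ x ∈ S, T x = 0 → x = 0) :
    ∃ δ : ℝ, 0 < δ ∧ ∀ x ∈ S, δ * ‖x‖ ≤ ‖T x‖ := by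
  by_contra hcon
  push_neg at hcon
  have hex : ∀ n : ℕ, ∃ x : H, x ∈ S ∧ ‖x‖ = 1 ∧ ‖T x‖ < 1 / (n + 1) := by
    intro n
    obtain ⟨x, hxS, hxT⟩ := hcon (1 / (n + 1)) (by positivity)
    have hx0 : x ≠ 0 := by
      rintro rfl; simp at hxT
    have hxn : 0 < ‖x‖ := norm_pos_iff.2 hx0
    refine ⟨((‖x‖⁻¹ : ℝ) : 𝕜) • x, S.smul_mem _ hxS, by
      rw [norm_smul, RCLike.norm_ofReal, abs_inv, abs_norm]; field_simp, ?_⟩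
    rw [map_smul, norm_smul, RCLike.norm_ofReal, abs_inv, abs_norm, inv_mul_lt_iff₀ hxn]
    linarith [hxT]
  choose u huS hun huT using hex
  obtain ⟨φ, hφ, hcau⟩ := compact_subseq hK u (fun n => (hun n).le)
  have hT0 : Tendsto (fun n => T (u (φ n))) atTop (nhds 0) := by
    have hg0 : Tendsto (fun n : ℕ => 1 / ((φ n : ℝ) + 1)) atTop (nhds 0) :=
      tendsto_one_div_add_atTop_nhds_zero_nat.comp hφ.tendsto_atTop
    rw [tendsto_zero_iff_norm_tendsto_zero]
    exact squeeze_zero (fun n => norm_nonneg _) (fun n => (huT (φ n)).le) hg0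
  have hcau' : CauchySeq (fun n => u (φ n)) := by
    rw [Metric.cauchySeq_iff] at hcau ⊢
    intro ε hε
    have hTc : CauchySeq (fun n => T (u (φ n))) := hT0.cauchySeq
    rw [Metric.cauchySeq_iff] at hTc
    obtain ⟨N1, hN1⟩ := hcau (c * ε / 2) (by positivity)
    obtain ⟨N2, hN2⟩ := hTc (c * ε / 2) (by positivity)
    refine ⟨max N1 N2, fun m hm n hn => ?_⟩
    have h1 := hN1 m (le_trans (le_max_left _ _) hm) n (le_trans (le_max_left _ _) hn)
    have h2 := hN2 m (le_trans (le_max_right _ _) hm) n (le_trans (le_max_right _ _) hn)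
    have h3 : c * ‖u (φ m) - u (φ n)‖ ≤ ‖T (u (φ m) - u (φ n))‖ + ‖K (u (φ m) - u (φ n))‖ :=
      h _ (sub_mem (huS (φ m)) (huS (φ n)))
    rw [map_sub, map_sub] at h3
    rw [dist_eq_norm] at h1 h2 ⊢
    nlinarith [norm_nonneg (u (φ m) - u (φ n))]
  obtain ⟨l, hl⟩ := cauchySeq_tendsto_of_complete hcau'
  have hlS : l ∈ S := hS.mem_of_tendsto hl (Eventually.of_forall fun n => huS (φ n))
  have hln : ‖l‖ = 1 := by
    have h1 : Tendsto (fun n : ℕ => (1 : ℝ)) atTop (nhds ‖l‖) := by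
      simpa [hun] using hl.norm
    exact tendsto_nhds_unique h1 tendsto_const_nhds
  have hTl : T l = 0 := tendsto_nhds_unique ((T.continuous.tendsto l).comp hl) hT0
  rw [h0 l hlS hTl, norm_zero] at hln
  exact zero_ne_one hln


/-- If `P, Q` are orthogonal projections with `‖P - Q‖ < 1` in the Calkin algebra
(expressed as: `P - Q` is within distance `< 1` of a compact operator), then
`Q|_{ran P} : ran P → ran Q` is Fredholm with index
`dim(ran P ∩ ker Q) - dim(ker P ∩ ran Q)`. -/
theorem stmt5 {𝕜 H : Type*} [RCLike 𝕜] [NormedAddCommGroup H] [InnerProductSpace 𝕜 H]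
    [CompleteSpace H]
    (P Q : H →L[𝕜] H)
    (hPa : ContinuousLinearMap.adjoint P = P) (hP2 : P * P = P)
    (hQa : ContinuousLinearMap.adjoint Q = Q) (hQ2 : Q * Q = Q)
    (hCalkin : ∃ K : H →L[𝕜] H, IsCompactOperator ⇑K ∧ ‖P - Q - K‖ < 1)
    (g : ↥(LinearMap.range (P : H →ₗ[𝕜] H)) →ₗ[𝕜] ↥(LinearMap.range (Q : H →ₗ[𝕜] H)))
    (hg : ∀ x : ↥(LinearMap.range (P : H →ₗ[𝕜] H)), (g x : H) = Q x) :
    FiniteDimensional 𝕜 ↥(LinearMap.ker g) ∧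
    FiniteDimensional 𝕜 (↥(LinearMap.range (Q : H →ₗ[𝕜] H)) ⧸ LinearMap.range g) ∧
    (Module.finrank 𝕜 ↥(LinearMap.ker g) : ℤ) -
        (Module.finrank 𝕜 (↥(LinearMap.range (Q : H →ₗ[𝕜] H)) ⧸ LinearMap.range g) : ℤ) =
      (Module.finrank 𝕜 ↥(LinearMap.range (P : H →ₗ[𝕜] H) ⊓ LinearMap.ker (Q : H →ₗ[𝕜] H)) : ℤ) -
        (Module.finrank 𝕜 ↥(LinearMap.ker (P : H →ₗ[𝕜] H) ⊓ LinearMap.range (Q : H →ₗ[𝕜] H)) : ℤ) := by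
  obtain ⟨K, hKc, hc1⟩ := hCalkin
  set c := ‖P - Q - K‖ with hc_def
  have hcpos : 0 < 1 - c := by have := norm_nonneg (P - Q - K); linarith
  -- basic membership facts
  have hPP : ∀ x, P (P x) = P x := fun x => by
    have := DFunLike.congr_fun hP2 x; simpa using this
  have hQQ : ∀ x, Q (Q x) = Q x := fun x => by
    have := DFunLike.congr_fun hQ2 x; simpa using this
  have memP : ∀ x : H, x ∈ LinearMap.range (P : H →ₗ[𝕜] H) ↔ P x = x := fun x =>
    ⟨by rintro ⟨y, rfl⟩; exact hPP y, fun h => ⟨x, h⟩⟩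
  have memQ : ∀ x : H, x ∈ LinearMap.range (Q : H →ₗ[𝕜] H) ↔ Q x = x := fun x =>
    ⟨by rintro ⟨y, rfl⟩; exact hQQ y, fun h => ⟨x, h⟩⟩
  -- ranges are closed
  have hPcl : IsClosed ((LinearMap.range (P : H →ₗ[𝕜] H) : Submodule 𝕜 H) : Set H) := by
    have h : (LinearMap.range (P : H →ₗ[𝕜] H) : Submodule 𝕜 H)
        = LinearMap.ker ((ContinuousLinearMap.id 𝕜 H - P : H →L[𝕜] H) : H →ₗ[𝕜] H) := by
      ext x
      simp only [memP, LinearMap.mem_ker, ContinuousLinearMap.coe_coe, ContinuousLinearMap.sub_apply,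
        ContinuousLinearMap.id_apply]
      rw [sub_eq_zero, eq_comm]
    rw [h]
    exact ContinuousLinearMap.isClosed_ker _
  have hQcl : IsClosed ((LinearMap.range (Q : H →ₗ[𝕜] H) : Submodule 𝕜 H) : Set H) := by
    have h : (LinearMap.range (Q : H →ₗ[𝕜] H) : Submodule 𝕜 H)
        = LinearMap.ker ((ContinuousLinearMap.id 𝕜 H - Q : H →L[𝕜] H) : H →ₗ[𝕜] H) := by
      ext x
      simp only [memQ, LinearMap.mem_ker, ContinuousLinearMap.coe_coe, ContinuousLinearMap.sub_apply,
        ContinuousLinearMap.id_apply]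
      rw [sub_eq_zero, eq_comm]
    rw [h]
    exact ContinuousLinearMap.isClosed_ker _
  -- the key estimates
  have est1 : ∀ x ∈ LinearMap.range (P : H →ₗ[𝕜] H), (1 - c) * ‖x‖ ≤ ‖Q x‖ + ‖K x‖ := by
    intro x hx
    have hPx : P x = x := (memP x).1 hx
    have h1 : ‖x - Q x - K x‖ ≤ c * ‖x‖ := by
      have h2 : (P - Q - K) x = x - Q x - K x := by
        simp [ContinuousLinearMap.sub_apply, hPx]
      rw [← h2]
      exact (P - Q - K).le_opNorm x
    have h4 : x = x - Q x - K x + Q x + K x := by abel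
    have h3 : ‖x‖ ≤ ‖x - Q x - K x‖ + ‖Q x‖ + ‖K x‖ := by
      calc ‖x‖ = ‖x - Q x - K x + Q x + K x‖ := by rw [← h4]
        _ ≤ _ := norm_add₃_le
    linarith
  have est2 : ∀ x ∈ LinearMap.ker (P : H →ₗ[𝕜] H) ⊓ LinearMap.range (Q : H →ₗ[𝕜] H), (1 - c) * ‖x‖ ≤ ‖K x‖ := by
    intro x hx
    have hPx : P x = 0 := hx.1
    have hQx : Q x = x := (memQ x).1 hx.2
    have h1 : ‖x + K x‖ ≤ c * ‖x‖ := by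
      have h2 : (P - Q - K) x = -(x + K x) := by
        simp [ContinuousLinearMap.sub_apply, hPx, hQx]; abel
      calc ‖x + K x‖ = ‖(P - Q - K) x‖ := by rw [h2, norm_neg]
        _ ≤ c * ‖x‖ := (P - Q - K).le_opNorm x
    have h3 : ‖x‖ ≤ ‖x + K x‖ + ‖K x‖ := by
      calc ‖x‖ = ‖x + K x - K x‖ := by rw [add_sub_cancel_right]
        _ ≤ _ := norm_sub_le _ _
    linarith
  -- the finite-dimensional pieces
  set W : Submodule 𝕜 H := LinearMap.range (P : H →ₗ[𝕜] H) ⊓ LinearMap.ker (Q : H →ₗ[𝕜] H) with hW_def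
  have hWcl : IsClosed (W : Set H) := by
    rw [hW_def, Submodule.coe_inf]
    exact hPcl.inter (ContinuousLinearMap.isClosed_ker Q)
  have hWfin : FiniteDimensional 𝕜 W := by
    apply findim_of_compact_bound hKc W hWcl hcpos
    intro x hx
    have hq : Q x = 0 := hx.2
    have := est1 x hx.1
    rwa [hq, norm_zero, zero_add] at this
  have hW'cl : IsClosed ((LinearMap.ker (P : H →ₗ[𝕜] H) ⊓ LinearMap.range (Q : H →ₗ[𝕜] H) : Submodule 𝕜 H) : Set H) := by
    rw [Submodule.coe_inf]
    exact (ContinuousLinearMap.isClosed_ker P).inter hQcl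
  have hW'fin : FiniteDimensional 𝕜 (LinearMap.ker (P : H →ₗ[𝕜] H) ⊓ LinearMap.range (Q : H →ₗ[𝕜] H) : Submodule 𝕜 H) :=
    findim_of_compact_bound hKc _ hW'cl hcpos est2
  -- the subspace V on which Q is bounded below
  set V : Submodule 𝕜 H := Wᗮ ⊓ LinearMap.range (P : H →ₗ[𝕜] H) with hV_def
  have hVcl : IsClosed (V : Set H) := by
    rw [hV_def, Submodule.coe_inf]
    exact W.isClosed_orthogonal.inter hPcl
  have hV0 : ∀ x ∈ V, Q x = 0 → x = 0 := by
    intro x hx hQx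
    have hxW : x ∈ W := ⟨hx.2, hQx⟩
    have h0 : (inner 𝕜 x x : 𝕜) = 0 := (Submodule.mem_orthogonal _ _).1 hx.1 x hxW
    exact inner_self_eq_zero.1 h0
  obtain ⟨δ, hδpos, hδ⟩ := bddBelow_of_compact_bound hKc V hVcl hcpos
    (fun x hx => est1 x hx.2) hV0
  -- Q restricted to V has closed range
  haveI : CompleteSpace V := hVcl.completeSpace_coe
  set f : V →L[𝕜] H := Q.comp V.subtypeL with hf_def
  have hanti : AntilipschitzWith (δ⁻¹).toNNReal f := by
    apply f.antilipschitz_of_bound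
    intro y
    have h1 : δ * ‖(y : H)‖ ≤ ‖Q (y : H)‖ := hδ _ y.2
    have h2 : ‖y‖ = ‖(y : H)‖ := rfl
    rw [h2, Real.coe_toNNReal _ (by positivity)]
    rw [show f y = Q (y : H) from rfl]
    rw [inv_mul_eq_div, le_div_iff₀ hδpos]
    linarith
  have hfr : IsClosed (Set.range f) := hanti.isClosed_range f.uniformContinuous
  have hQV : Q '' (V : Set H) = Set.range f := by
    ext y
    constructor
    · rintro ⟨x, hx, rfl⟩; exact ⟨⟨x, hx⟩, rfl⟩
    · rintro ⟨⟨x, hx⟩, rfl⟩; exact ⟨x, hx, rfl⟩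
  -- Q(ran P) = Q(V)
  haveI : CompleteSpace W := hWcl.completeSpace_coe
  have himg : Q '' ((LinearMap.range (P : H →ₗ[𝕜] H) : Submodule 𝕜 H) : Set H) = Q '' (V : Set H) := by
    apply Set.Subset.antisymm
    · rintro _ ⟨x, hx, rfl⟩
      set w : H := (W.orthogonalProjectionOnto x : H) with hw_def
      have hwW : w ∈ W := SetLike.coe_mem _
      have hv : x - w ∈ Wᗮ := Submodule.sub_starProjection_mem_orthogonal (K := W) x
      have hvV : x - w ∈ V := ⟨hv, sub_mem hx ((inf_le_left : W ≤ LinearMap.range (P : H →ₗ[𝕜] H)) hwW)⟩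
      refine ⟨x - w, hvV, ?_⟩
      have hQw : Q w = 0 := (inf_le_right : W ≤ LinearMap.ker (Q : H →ₗ[𝕜] H)) hwW
      rw [map_sub, hQw, sub_zero]
    · exact Set.image_mono (fun x hx => hx.2)
  -- range of g is closed in ran Q
  have hgr : ((LinearMap.range g : Submodule 𝕜 ↥(LinearMap.range (Q : H →ₗ[𝕜] H))) : Set ↥(LinearMap.range (Q : H →ₗ[𝕜] H)))
      = ((LinearMap.range (Q : H →ₗ[𝕜] H)).subtype) ⁻¹' (Q '' (V : Set H)) := by
    ext y
    simp only [SetLike.mem_coe, LinearMap.mem_range, Set.mem_preimage]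
    rw [← Set.ext_iff.mp himg ((LinearMap.range (Q : H →ₗ[𝕜] H)).subtype y)]
    constructor
    · rintro ⟨x, rfl⟩
      exact ⟨(x : H), x.2, (hg x).symm⟩
    · rintro ⟨x, hx, hxy⟩
      refine ⟨⟨x, hx⟩, ?_⟩
      apply Subtype.ext
      rw [hg]; exact hxy
  have hScl : IsClosed ((LinearMap.range g : Submodule 𝕜 ↥(LinearMap.range (Q : H →ₗ[𝕜] H)))
      : Set ↥(LinearMap.range (Q : H →ₗ[𝕜] H))) := by
    rw [hgr, hQV]
    exact hfr.preimage (continuous_subtype_val)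
  -- set up the quotient
  haveI : CompleteSpace ↥(LinearMap.range (Q : H →ₗ[𝕜] H) : Submodule 𝕜 H) := hQcl.completeSpace_coe
  set S : Submodule 𝕜 ↥(LinearMap.range (Q : H →ₗ[𝕜] H)) := LinearMap.range g with hS_def
  haveI : CompleteSpace S := hScl.completeSpace_coe
  have hcompl : IsCompl S Sᗮ := Submodule.isCompl_orthogonal_of_hasOrthogonalProjection
  have e2 : (↥(LinearMap.range (Q : H →ₗ[𝕜] H)) ⧸ S) ≃ₗ[𝕜] ↥Sᗮ :=
    Submodule.quotientEquivOfIsCompl S Sᗮ hcompl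
  -- identify S-perp with ker P ⊓ ran Q
  have hPsa : IsSelfAdjoint P := by
    rw [IsSelfAdjoint, ContinuousLinearMap.star_eq_adjoint]; exact hPa
  have hQsa : IsSelfAdjoint Q := by
    rw [IsSelfAdjoint, ContinuousLinearMap.star_eq_adjoint]; exact hQa
  have hPsym : ∀ u w : H, (inner 𝕜 (P u) w : 𝕜) = inner 𝕜 u (P w) := fun u w =>
    hPsa.isSymmetric u w
  have hQsym : ∀ u w : H, (inner 𝕜 (Q u) w : 𝕜) = inner 𝕜 u (Q w) := fun u w =>
    hQsa.isSymmetric u w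
  have hSperp : Sᗮ = Submodule.comap (LinearMap.range (Q : H →ₗ[𝕜] H)).subtype
      (LinearMap.ker (P : H →ₗ[𝕜] H) ⊓ LinearMap.range (Q : H →ₗ[𝕜] H)) := by
    ext y
    rw [Submodule.mem_orthogonal, Submodule.mem_comap, Submodule.mem_inf]
    constructor
    · intro hy
      refine ⟨?_, y.2⟩
      rw [LinearMap.mem_ker]
      show P (y : H) = 0
      have h5 : ∀ z : H, (inner 𝕜 z (P (y : H)) : 𝕜) = 0 := by
        intro z
        rw [← hPsym z (y : H)]
        have h3 := hy (g ⟨P z, ⟨z, rfl⟩⟩) ⟨_, rfl⟩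
        rw [Submodule.coe_inner, hg] at h3
        rw [hQsym] at h3
        rwa [(memQ _).1 y.2] at h3
      exact inner_self_eq_zero.1 (h5 (P (y : H)))
    · rintro ⟨h6, -⟩
      rintro u ⟨x, rfl⟩
      rw [Submodule.coe_inner, hg, hQsym, (memQ _).1 y.2]
      obtain ⟨z, hz⟩ := x.2
      rw [← hz, ContinuousLinearMap.coe_coe, hPsym]
      have h6' : P (y : H) = 0 := h6
      rw [h6', inner_zero_right]
  -- identify ker g with ran P ⊓ ker Q
  have hker : LinearMap.ker g = Submodule.comap (LinearMap.range (P : H →ₗ[𝕜] H)).subtype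
      (LinearMap.range (P : H →ₗ[𝕜] H) ⊓ LinearMap.ker (Q : H →ₗ[𝕜] H)) := by
    ext x
    rw [LinearMap.mem_ker, Submodule.mem_comap, Submodule.mem_inf]
    constructor
    · intro h
      refine ⟨x.2, ?_⟩
      rw [LinearMap.mem_ker]
      show Q (x : H) = 0
      rw [← hg, h, Submodule.coe_zero]
    · rintro ⟨-, h⟩
      apply Subtype.ext
      rw [hg, Submodule.coe_zero]
      exact h
  have eK : ↥(LinearMap.ker g) ≃ₗ[𝕜] ↥(LinearMap.range (P : H →ₗ[𝕜] H) ⊓ LinearMap.ker (Q : H →ₗ[𝕜] H)) :=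
    (LinearEquiv.ofEq _ _ hker).trans (Submodule.comapSubtypeEquivOfLe inf_le_left)
  have eC : (↥(LinearMap.range (Q : H →ₗ[𝕜] H)) ⧸ S) ≃ₗ[𝕜] ↥(LinearMap.ker (P : H →ₗ[𝕜] H) ⊓ LinearMap.range (Q : H →ₗ[𝕜] H)) :=
    e2.trans ((LinearEquiv.ofEq _ _ hSperp).trans (Submodule.comapSubtypeEquivOfLe inf_le_right))
  haveI fin1 : FiniteDimensional 𝕜 ↥(LinearMap.ker g) := eK.symm.finiteDimensional
  haveI fin2 : FiniteDimensional 𝕜 (↥(LinearMap.range (Q : H →ₗ[𝕜] H)) ⧸ S) := eC.symm.finiteDimensional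
  exact ⟨fin1, fin2, by rw [eK.finrank_eq, eC.finrank_eq]⟩
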